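/- With T and π as above, the operators T, X, Y = πT on ℝ[X^{±1}] satisfy TXT = X^{-1} and TY^{-1}T = Y. -/

import Mathlib

open LaurentPolynomial

/-- The linear operator on `ℝ[X^{±1}]` defined by its values on the monomial basis. -/
noncomputable def onBasis (g : ℤ → LaurentPolynomial ℝ) :
    LaurentPolynomial ℝ →ₗ[ℝ] LaurentPolynomial ℝ :=
  Finsupp.lsum ℝ (fun n => LinearMap.toSpanSingleton ℝ (LaurentPolynomial ℝ) (g n)) ∘ₗ
    (AddMonoidAlgebra.coeffLinearEquiv ℝ).toLinearMap

/-- `(X^{-n} - X^n)/(X² - 1)` as a Laurent polynomial. -/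
noncomputable def divDiff (n : ℤ) : LaurentPolynomial ℝ :=
  if 0 ≤ n then -∑ i ∈ Finset.range n.toNat, T (2 * (i : ℤ) - n)
  else ∑ i ∈ Finset.range (-n).toNat, T (n + 2 * (i : ℤ))

/-- The Demazure–Lusztig operator `T = u·s + (u - u⁻¹)/(X²-1)·(s - 1)`, `u = t^{1/2}`. -/
noncomputable def DLTop (u : ℝ) : LaurentPolynomial ℝ →ₗ[ℝ] LaurentPolynomial ℝ :=
  onBasis fun n => u • T (-n) + (u - u⁻¹) • divDiff n

/-- `π : f(X) ↦ f(q^{1/2} X^{-1})`, with `v = q^{1/2}`. -/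
noncomputable def piop (v : ℝ) : LaurentPolynomial ℝ →ₗ[ℝ] LaurentPolynomial ℝ :=
  onBasis fun n => (v ^ n) • T (-n)

/-- Multiplication by `X`. -/
noncomputable def Xop : LaurentPolynomial ℝ →ₗ[ℝ] LaurentPolynomial ℝ :=
  onBasis fun n => T (n + 1)

/-- Multiplication by `X⁻¹`. -/
noncomputable def Xinvop : LaurentPolynomial ℝ →ₗ[ℝ] LaurentPolynomial ℝ :=
  onBasis fun n => T (n - 1)

/-- `Y = π T`. -/
noncomputable def Yop (u v : ℝ) : LaurentPolynomial ℝ →ₗ[ℝ] LaurentPolynomial ℝ :=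
  piop v ∘ₗ DLTop u

/-- `Y⁻¹ = T⁻¹ π⁻¹ = (T - (u - u⁻¹)) π`, using the Hecke relation and `π² = 1`. -/
noncomputable def Yinvop (u v : ℝ) : LaurentPolynomial ℝ →ₗ[ℝ] LaurentPolynomial ℝ :=
  (DLTop u - (u - u⁻¹) • LinearMap.id) ∘ₗ piop v

lemma onBasis_T (g : ℤ → LaurentPolynomial ℝ) (n : ℤ) : onBasis g (T n) = g n := by
  rw [onBasis, LinearMap.comp_apply]
  erw [show (AddMonoidAlgebra.coeffLinearEquiv ℝ) (T n : LaurentPolynomial ℝ) =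
    Finsupp.single n 1 from rfl, Finsupp.lsum_single]; simp

lemma lext {f g : LaurentPolynomial ℝ →ₗ[ℝ] LaurentPolynomial ℝ}
    (h : ∀ n, f (T n) = g (T n)) : f = g := by
  apply AddMonoidAlgebra.lhom_ext'
  intro a; apply LinearMap.ext; intro b
  simp only [LinearMap.comp_apply, AddMonoidAlgebra.lsingle_apply]
  have hs : (AddMonoidAlgebra.single a b : LaurentPolynomial ℝ) = b • T a := by
    rw [show (T a : LaurentPolynomial ℝ) = AddMonoidAlgebra.single a 1 from rfl]
    rw [AddMonoidAlgebra.smul_single, smul_eq_mul, mul_one]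
  rw [hs, map_smul, map_smul]
  exact congrArg _ (h a)

lemma Tmul (a b c : ℤ) (h : a + b = c) : (T a : LaurentPolynomial ℝ) * T b = T c := by
  rw [← T_add, h]

lemma T_sub_one_ne (m : ℤ) (hm : m ≠ 0) : (T m - 1 : LaurentPolynomial ℝ) ≠ 0 := by
  intro h
  have h2 : (T m - 1 : LaurentPolynomial ℝ).coeff m = 0 := by rw [h]; rfl
  rw [AddMonoidAlgebra.coeff_sub, Finsupp.sub_apply, ← T_zero] at h2
  rw [T_apply, T_apply, if_pos rfl, if_neg (Ne.symm hm)] at h2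
  norm_num at h2

lemma cancel {a b : LaurentPolynomial ℝ} (m : ℤ) (hm : m ≠ 0)
    (h : (T m - 1) * a = (T m - 1) * b) : a = b :=
  mul_left_cancel₀ (T_sub_one_ne m hm) h

lemma telescope (m : ℤ) (k : ℕ) :
    (T 2 - 1 : LaurentPolynomial ℝ) * ∑ i ∈ Finset.range k, T (m + 2 * (i : ℤ)) =
      T (m + 2 * (k : ℤ)) - T m := by
  rw [Finset.mul_sum]
  have : ∀ i ∈ Finset.range k, (T 2 - 1 : LaurentPolynomial ℝ) * T (m + 2 * (i : ℤ)) =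
      T (m + 2 * ((i : ℤ) + 1)) - T (m + 2 * (i : ℤ)) := by
    intro i _
    rw [sub_mul, one_mul, Tmul 2 (m + 2*(i:ℤ)) (m + 2*((i:ℤ)+1)) (by ring)]
  rw [Finset.sum_congr rfl this]
  have := Finset.sum_range_sub (f := fun i : ℕ => (T (m + 2 * (i : ℤ)) : LaurentPolynomial ℝ)) k
  simp only [Nat.cast_add, Nat.cast_one] at this ⊢
  rw [this]
  norm_num

lemma divDiff_mul (n : ℤ) :
    (T 2 - 1 : LaurentPolynomial ℝ) * divDiff n = T (-n) - T n := by
  rw [divDiff]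
  by_cases h : 0 ≤ n
  · rw [if_pos h, mul_neg]
    have hr : ∀ i ∈ Finset.range n.toNat, (T (2*(i:ℤ) - n) : LaurentPolynomial ℝ) = T (-n + 2*(i:ℤ)) := by
      intro i _; congr 1; ring
    rw [Finset.sum_congr rfl hr, telescope (-n) n.toNat, Int.toNat_of_nonneg h]
    rw [show -n + 2 * n = n by ring]
    ring
  · rw [if_neg h]
    push_neg at h
    rw [telescope n (-n).toNat, Int.toNat_of_nonneg (by omega)]
    rw [show n + 2 * -n = -n by ring]

lemma divDiff_neg (n : ℤ) : divDiff (-n) = -divDiff n := by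
  apply cancel 2 (by norm_num)
  rw [divDiff_mul, mul_neg, divDiff_mul, neg_neg]
  abel

noncomputable def sop : LaurentPolynomial ℝ →ₗ[ℝ] LaurentPolynomial ℝ :=
  onBasis fun n => T (-n)

noncomputable def Dop : LaurentPolynomial ℝ →ₗ[ℝ] LaurentPolynomial ℝ :=
  onBasis divDiff

lemma sop_T (n : ℤ) : sop (T n) = T (-n) := onBasis_T _ n
lemma Dop_T (n : ℤ) : Dop (T n) = divDiff n := onBasis_T _ n

lemma sop_mulT (m : ℤ) (f : LaurentPolynomial ℝ) : sop (T m * f) = T (-m) * sop f := by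
  have : sop ∘ₗ LinearMap.mulLeft ℝ (T m) = LinearMap.mulLeft ℝ (T (-m)) ∘ₗ sop := by
    apply lext
    intro n
    simp only [LinearMap.comp_apply, LinearMap.mulLeft_apply]
    rw [Tmul m n (m + n) rfl, sop_T, sop_T, Tmul (-m) (-n) (-(m+n)) (by ring)]
  exact LinearMap.congr_fun this f

lemma Dop_mul (f : LaurentPolynomial ℝ) : (T 2 - 1) * Dop f = sop f - f := by
  have : LinearMap.mulLeft ℝ (T 2 - 1) ∘ₗ Dop = sop - LinearMap.id := by
    apply lext
    intro n
    simp only [LinearMap.comp_apply, LinearMap.mulLeft_apply, LinearMap.sub_apply,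
      LinearMap.id_apply]
    rw [Dop_T, sop_T, divDiff_mul]
  exact LinearMap.congr_fun this f

lemma sop_div (n : ℤ) : sop (divDiff n) = T 2 * divDiff n := by
  apply cancel (-2) (by norm_num)
  have h1 : sop ((T 2 - 1) * divDiff n) = sop (T (-n) - T n) := by rw [divDiff_mul]
  rw [sub_mul, one_mul, map_sub, sop_mulT, map_sub, sop_T, sop_T, neg_neg] at h1
  -- h1 : T (-2) * sop (divDiff n) - sop (divDiff n) = T n - T (-n)
  have h2 : (T (-2) - 1 : LaurentPolynomial ℝ) * sop (divDiff n) = T n - T (-n) := by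
    rw [sub_mul, one_mul]; exact h1
  rw [h2]
  have h3 : (T (-2) - 1 : LaurentPolynomial ℝ) * (T 2 * divDiff n) =
      -((T 2 - 1) * divDiff n) := by
    rw [sub_mul, one_mul, ← mul_assoc, Tmul (-2) 2 0 (by ring), T_zero, one_mul]
    ring
  rw [h3, divDiff_mul]
  abel

lemma Dop_div (n : ℤ) : Dop (divDiff n) = divDiff n := by
  apply cancel 2 (by norm_num)
  rw [Dop_mul, sop_div]
  rw [sub_mul, one_mul]

lemma DLTop_T (u : ℝ) (n : ℤ) :
    DLTop u (T n) = u • T (-n) + (u - u⁻¹) • divDiff n := onBasis_T _ n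

lemma DLTop_eq (u : ℝ) : DLTop u = u • sop + (u - u⁻¹) • Dop := by
  apply lext
  intro n
  rw [DLTop_T]
  simp only [LinearMap.add_apply, LinearMap.smul_apply]
  rw [sop_T, Dop_T]

lemma DLTop_div (u : ℝ) (n : ℤ) :
    DLTop u (divDiff n) = u • (T 2 * divDiff n) + (u - u⁻¹) • divDiff n := by
  rw [DLTop_eq]
  simp only [LinearMap.add_apply, LinearMap.smul_apply]
  rw [sop_div, Dop_div]

lemma T2_div (n : ℤ) : (T 2 : LaurentPolynomial ℝ) * divDiff n = T (-n) - T n + divDiff n := by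
  have := divDiff_mul n
  linear_combination this

lemma hecke (u : ℝ) (hu : u ≠ 0) :
    DLTop u ∘ₗ DLTop u = (u - u⁻¹) • DLTop u + LinearMap.id := by
  apply lext
  intro n
  simp only [LinearMap.comp_apply, LinearMap.add_apply, LinearMap.smul_apply,
    LinearMap.id_apply]
  rw [DLTop_T, map_add, map_smul, map_smul, DLTop_T, DLTop_div, neg_neg, divDiff_neg,
    T2_div]
  match_scalars <;> field_simp <;> ring

lemma piop_T (v : ℝ) (n : ℤ) : piop v (T n) = (v ^ n) • T (-n) := onBasis_T _ n

lemma piop_sq (v : ℝ) (hv : v ≠ 0) : piop v ∘ₗ piop v = LinearMap.id := by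
  apply lext
  intro n
  simp only [LinearMap.comp_apply, LinearMap.id_apply]
  rw [piop_T, map_smul, piop_T, smul_smul, neg_neg, ← zpow_add₀ hv]
  simp

lemma Xop_T (n : ℤ) : Xop (T n) = T (n + 1) := onBasis_T _ n
lemma Xinvop_T (n : ℤ) : Xinvop (T n) = T (n - 1) := onBasis_T _ n

lemma Xop_mul (f : LaurentPolynomial ℝ) : Xop f = T 1 * f := by
  have : Xop = LinearMap.mulLeft ℝ (T 1) := by
    apply lext
    intro n
    rw [Xop_T, LinearMap.mulLeft_apply, Tmul 1 n (n+1) (by ring)]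
  rw [this, LinearMap.mulLeft_apply]

lemma sop_T1div (n : ℤ) : sop (T 1 * divDiff n) = T 1 * divDiff n := by
  rw [sop_mulT, sop_div, ← mul_assoc, Tmul (-1) 2 1 (by ring)]

lemma Dop_T1div (n : ℤ) : Dop (T 1 * divDiff n) = 0 := by
  apply cancel 2 (by norm_num)
  rw [Dop_mul, sop_T1div, mul_zero, sub_self]

lemma divDiff_shift (n : ℤ) : divDiff (1 - n) = -T (n - 1) - T 1 * divDiff n := by
  apply cancel 2 (by norm_num)
  have e1 := divDiff_mul (1 - n)
  rw [show -(1 - n) = n - 1 by ring] at e1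
  rw [e1]
  have e2 := divDiff_mul n
  have h5 : (T 2 : LaurentPolynomial ℝ) * T (n - 1) = T (n + 1) := Tmul 2 (n-1) (n+1) (by ring)
  have h6 : (T 1 : LaurentPolynomial ℝ) * T (-n) = T (1 - n) := Tmul 1 (-n) (1-n) (by ring)
  have h7 : (T 1 : LaurentPolynomial ℝ) * T n = T (n + 1) := Tmul 1 n (n+1) (by ring)
  linear_combination (T 1 : LaurentPolynomial ℝ) * e2 + h6 + h5 - h7

lemma txt (u : ℝ) (hu : u ≠ 0) : DLTop u ∘ₗ Xop ∘ₗ DLTop u = Xinvop := by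
  apply lext
  intro n
  simp only [LinearMap.comp_apply]
  rw [DLTop_T, map_add, map_smul, map_smul, Xop_mul, Xop_mul,
    Tmul 1 (-n) (1 - n) (by ring)]
  rw [map_add, map_smul, map_smul, DLTop_T, DLTop_eq]
  simp only [LinearMap.add_apply, LinearMap.smul_apply]
  rw [sop_T1div, Dop_T1div, Xinvop_T, divDiff_shift,
    show -(1 - n) = n - 1 by ring]
  match_scalars <;> field_simp <;> ring

/-- In the polynomial representation of the A₁ DAHA: `TXT = X⁻¹` and `TY⁻¹T = Y`
(`v = q^{1/2}`, `u = t^{1/2}`). -/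
theorem daha_braid_relations (u v : ℝ) (hu : u ≠ 0) (hv : 0 < v) :
    (Yinvop u v ∘ₗ Yop u v = LinearMap.id) ∧
    (DLTop u ∘ₗ Xop ∘ₗ DLTop u = Xinvop) ∧
    (DLTop u ∘ₗ Yinvop u v ∘ₗ DLTop u = Yop u v) := by
  have hpi : ∀ p, piop v (piop v p) = p := fun p => by
    simpa using LinearMap.congr_fun (piop_sq v (ne_of_gt hv)) p
  have hH : ∀ p, DLTop u (DLTop u p) = (u - u⁻¹) • DLTop u p + p := fun p => by
    simpa using LinearMap.congr_fun (hecke u hu) p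
  refine ⟨?_, txt u hu, ?_⟩
  · apply LinearMap.ext; intro p
    simp only [Yinvop, Yop, LinearMap.comp_apply, LinearMap.sub_apply,
      LinearMap.smul_apply, LinearMap.id_apply]
    rw [hpi, hH]
    abel
  · apply LinearMap.ext; intro p
    simp only [Yinvop, Yop, LinearMap.comp_apply, LinearMap.sub_apply,
      LinearMap.smul_apply, LinearMap.id_apply]
    rw [map_sub, map_smul, hH]
    abel
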